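/- arXiv:2501.09208 — 4 statements merged into one kernel-verified Lean document; each statement's English description precedes it below -/
import Mathlib

section
/- Let C(z) satisfy C(z) = 1 + 2z C(z) + z² C(z)². Then for all n ≥ 2 and non-negative integers t, the coefficient of z^n in zC(z)·((zC(z))^t − (z/(1−z))^t)/(1+zC(z))² equals C(2n-3, n-t-1) − C(2n-3, n-t-2) − C(n-2, t-1). -/
/-- Binomial coefficient `C(a,b)` for integers `a`, `b`, with the convention that it
vanishes when `b < 0` or `b > a`. -/
def zchoose (a b : ℤ) : ℤ :=
  if 0 ≤ b ∧ b ≤ a then (a.toNat).choose b.toNat else 0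

open PowerSeries Finset

lemma zchoose_eq (a b : ℤ) (h0 : 0 ≤ b) (h1 : b ≤ a) :
    zchoose a b = ((a.toNat).choose b.toNat : ℤ) := if_pos ⟨h0, h1⟩

lemma zchoose_eq_zero (a b : ℤ) (h : ¬ (0 ≤ b ∧ b ≤ a)) : zchoose a b = 0 := if_neg h

lemma zchoose_symm (N r t : ℤ) (h : r + t = N) (hr : 0 ≤ r) (ht : 0 ≤ t) :
    zchoose N r = zchoose N t := by
  rw [zchoose_eq N r hr (by omega), zchoose_eq N t ht (by omega),
    show r.toNat = N.toNat - t.toNat from by omega]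
  exact_mod_cast Nat.choose_symm (show t.toNat ≤ N.toNat by omega)

/-- Ballot numbers: `[z^m] B(z)^k` where `B` is the Catalan generating function. -/
def bal (k m : ℕ) : ℚ :=
  if m = 0 then 1 else ((2 * m + k - 1).choose m : ℚ) - ((2 * m + k - 1).choose (m - 1) : ℚ)

lemma bal_zero (k : ℕ) : bal k 0 = 1 := by simp [bal]

lemma bal_rec (k m : ℕ) : bal (k + 2) m = bal (k + 1) (m + 1) - bal k (m + 1) := by
  cases m with
  | zero =>
      have h1 : bal (k + 1) 1 = ((k : ℚ) + 2) - 1 := by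
        rw [bal, if_neg one_ne_zero, show 2 * 1 + (k + 1) - 1 = k + 2 from by omega]
        simp [Nat.choose_one_right]
      have h2 : bal k 1 = ((k : ℚ) + 1) - 1 := by
        rw [bal, if_neg one_ne_zero, show 2 * 1 + k - 1 = k + 1 from by omega]
        simp [Nat.choose_one_right]
      rw [bal_zero, h1, h2]
      ring
  | succ j =>
      have e1 : 2 * (j + 1) + (k + 2) - 1 = 2 * j + k + 3 := by omega
      have e2 : 2 * (j + 2) + (k + 1) - 1 = 2 * j + k + 4 := by omega
      have e3 : 2 * (j + 2) + k - 1 = 2 * j + k + 3 := by omega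
      have e4 : j + 1 - 1 = j := by omega
      have e5 : j + 2 - 1 = j + 1 := by omega
      simp only [bal, Nat.succ_ne_zero, if_false, e1, e2, e3, e4, e5]
      have p1 : (2 * j + k + 4).choose (j + 2)
          = (2 * j + k + 3).choose (j + 1) + (2 * j + k + 3).choose (j + 2) :=
        Nat.choose_succ_succ' (2 * j + k + 3) (j + 1)
      have p2 : (2 * j + k + 4).choose (j + 1)
          = (2 * j + k + 3).choose j + (2 * j + k + 3).choose (j + 1) :=
        Nat.choose_succ_succ' (2 * j + k + 3) j
      rw [p1, p2]
      push_cast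
      ring

lemma bal_zero_succ (m : ℕ) : bal 0 (m + 1) = 0 := by
  have e : 2 * (m + 1) + 0 - 1 = 2 * m + 1 := by omega
  simp only [bal, Nat.succ_ne_zero, if_false, e, Nat.add_sub_cancel]
  rw [Nat.choose_symm_half]
  ring

lemma catalan_bal (m : ℕ) : (catalan m : ℚ) = bal 1 m := by
  cases m with
  | zero => simp [bal]
  | succ j =>
      have h1n : (j + 2) * catalan (j + 1) = (2 * (j + 1)).choose (j + 1) :=
        succ_mul_catalan_eq_centralBinom (j + 1)
      have h2n : (2 * (j + 1)).choose (j + 1) * (j + 1) = (2 * (j + 1)).choose j * (j + 2) := by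
        have h := Nat.choose_succ_right_eq (2 * (j + 1)) j
        rw [show 2 * (j + 1) - j = j + 2 from by omega] at h
        exact h
      have h1 : ((j : ℚ) + 2) * (catalan (j + 1) : ℚ)
          = (((2 * (j + 1)).choose (j + 1) : ℕ) : ℚ) := by exact_mod_cast h1n
      have h2 : (((2 * (j + 1)).choose (j + 1) : ℕ) : ℚ) * ((j : ℚ) + 1)
          = (((2 * (j + 1)).choose j : ℕ) : ℚ) * ((j : ℚ) + 2) := by exact_mod_cast h2n
      have hb : bal 1 (j + 1)
          = (((2 * (j + 1)).choose (j + 1) : ℕ) : ℚ) - (((2 * (j + 1)).choose j : ℕ) : ℚ) := by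
        rw [bal, if_neg (Nat.succ_ne_zero j), show 2 * (j + 1) + 1 - 1 = 2 * (j + 1) from by omega,
          show j + 1 - 1 = j from by omega]
      rw [hb]
      have hq : ((j : ℚ) + 2) ≠ 0 := by positivity
      apply mul_left_cancel₀ hq
      rw [h1]
      linear_combination -h2

/-- Coefficients of powers of the Catalan generating function are ballot numbers. -/
lemma coeff_pow_bal (B : PowerSeries ℚ) (hB : B = 1 + X * B ^ 2) :
    ∀ k m, PowerSeries.coeff m (B ^ (k + 1)) = bal (k + 1) m := by
  -- the key shift identity
  have shift : ∀ k m : ℕ, PowerSeries.coeff m (B ^ (k + 2)) =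
      PowerSeries.coeff (m + 1) (B ^ (k + 1)) - PowerSeries.coeff (m + 1) (B ^ k) := by
    intro k m
    have e : B ^ (k + 1) = B ^ k + X * B ^ (k + 2) := by
      calc B ^ (k + 1) = B ^ k * B := pow_succ B k
        _ = B ^ k * (1 + X * B ^ 2) := by rw [← hB]
        _ = B ^ k + X * B ^ (k + 2) := by ring
    have := congrArg (PowerSeries.coeff (m + 1)) e
    rw [map_add, coeff_succ_X_mul] at this
    linarith
  -- coefficients of B are Catalan numbers
  have hcat : ∀ m, PowerSeries.coeff m B = (catalan m : ℚ) := by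
    intro m
    induction m using Nat.strong_induction_on with
    | _ m ih =>
      cases m with
      | zero =>
          rw [hB]
          simp
      | succ m =>
          have : PowerSeries.coeff (m + 1) B = PowerSeries.coeff m (B ^ 2) := by
            conv_lhs => rw [hB]
            rw [map_add, coeff_succ_X_mul]
            simp [coeff_one]
          rw [this, sq, PowerSeries.coeff_mul, catalan_succ']
          push_cast
          refine Finset.sum_congr rfl ?_
          intro ij hij
          rw [Finset.HasAntidiagonal.mem_antidiagonal] at hij
          rw [ih ij.1 (by omega), ih ij.2 (by omega)]
  intro k
  induction k using Nat.strong_induction_on with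
  | _ k ih =>
    match k with
    | 0 => intro m; rw [pow_one, hcat, catalan_bal]
    | 1 =>
        intro m
        have h2 : PowerSeries.coeff m (B ^ 2) =
            PowerSeries.coeff (m + 1) (B ^ 1) - PowerSeries.coeff (m + 1) (B ^ 0) :=
          shift 0 m
        rw [h2, pow_one, pow_zero, hcat, catalan_bal]
        have : PowerSeries.coeff (m + 1) (1 : PowerSeries ℚ) = 0 := by
          simp [coeff_one]
        rw [this]
        rw [bal_rec 0 m, bal_zero_succ]
    | (j + 2) =>
        intro m
        rw [shift (j + 1) m, ih (j + 1) (by omega) (m + 1), ih j (by omega) (m + 1),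
          bal_rec (j + 1) m]

open PowerSeries in
/-- If `C(z)` is the formal power series with `C = 1 + 2zC + z²C²`, then for `n ≥ 2`
the coefficient of `z^n` in `zC·((zC)^t − (z/(1−z))^t)/(1+zC)²` equals
`C(2n-3,n-t-1) − C(2n-3,n-t-2) − C(n-2,t-1)`. -/
theorem coeff_motzkin_term2 (C : PowerSeries ℚ)
    (hC : C = 1 + 2 * X * C + X ^ 2 * C ^ 2) (n t : ℕ) (hn : 2 ≤ n) :
    PowerSeries.coeff n
        (X * C * ((X * C) ^ t - (X * (1 - X)⁻¹) ^ t) * ((1 + X * C) ^ 2)⁻¹) =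
      ((zchoose (2 * (n : ℤ) - 3) ((n : ℤ) - t - 1)
        - zchoose (2 * (n : ℤ) - 3) ((n : ℤ) - t - 2)
        - zchoose ((n : ℤ) - 2) ((t : ℤ) - 1) : ℤ) : ℚ) := by
  have hCB : C = (1 + X * C) ^ 2 := by nth_rewrite 1 [hC]; ring
  have hc0 : constantCoeff C = 1 := by
    rw [hC]; simp
  set A : PowerSeries ℚ := (X * C) ^ t - (X * (1 - X)⁻¹) ^ t with hA
  have hXA : X * C * A * ((1 + X * C) ^ 2)⁻¹ = X * A := by
    rw [← hCB]
    have hinv : C * C⁻¹ = 1 := PowerSeries.mul_inv_cancel C (by rw [hc0]; exact one_ne_zero)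
    calc X * C * A * C⁻¹ = X * A * (C * C⁻¹) := by ring
      _ = X * A := by rw [hinv, mul_one]
  rw [hXA]
  obtain ⟨m, rfl⟩ : ∃ m, n = m + 1 := ⟨n - 1, by omega⟩
  rw [coeff_succ_X_mul]
  have hm : 1 ≤ m := by omega
  rcases Nat.eq_zero_or_pos t with ht0 | ht1
  · -- t = 0 : the series is zero, and the two big binomials cancel
    subst ht0
    have hA0 : A = 0 := by simp [hA]
    rw [hA0, map_zero]
    rw [zchoose_symm (2 * ((m + 1 : ℕ) : ℤ) - 3) (((m + 1 : ℕ) : ℤ) - ((0 : ℕ) : ℤ) - 1)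
      (((m + 1 : ℕ) : ℤ) - ((0 : ℕ) : ℤ) - 2) (by omega) (by omega) (by omega)]
    rw [zchoose_eq_zero (((m + 1 : ℕ) : ℤ) - 2) (((0 : ℕ) : ℤ) - 1) (by omega)]
    push_cast
    ring
  · -- t ≥ 1
    have hsplit : PowerSeries.coeff m A =
        PowerSeries.coeff m (X ^ t * C ^ t) -
        PowerSeries.coeff m (X ^ t * ((1 - X)⁻¹) ^ t) := by
      rw [hA, map_sub, mul_pow, mul_pow]
    rcases le_or_gt t m with htm | htm
    · -- t ≤ m
      rw [hsplit, PowerSeries.coeff_X_pow_mul' , PowerSeries.coeff_X_pow_mul',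
        if_pos htm, if_pos htm]
      -- coefficient of C^t
      have hBcat : (1 + X * C) = 1 + X * (1 + X * C) ^ 2 := by
        conv_rhs => rw [← hCB]
      have hCt : C ^ t = (1 + X * C) ^ (2 * t) := by
        conv_lhs => rw [hCB, ← pow_mul]
      obtain ⟨s, rfl⟩ : ∃ s, t = s + 1 := ⟨t - 1, by omega⟩
      have hcoeffC : PowerSeries.coeff (m - (s + 1)) (C ^ (s + 1)) = bal (2 * (s + 1)) (m - (s + 1)) := by
        rw [hCt, show 2 * (s + 1) = (2 * s + 1) + 1 by ring,
          coeff_pow_bal (1 + X * C) hBcat (2 * s + 1) (m - (s + 1))]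
      -- coefficient of (1-X)⁻¹ ^ t
      have hinv1 : (1 - X : PowerSeries ℚ)⁻¹ = PowerSeries.mk 1 := by
        rw [PowerSeries.inv_eq_iff_mul_eq_one (by simp)]
        exact PowerSeries.mk_one_mul_one_sub_eq_one ℚ
      have hcoeffG : PowerSeries.coeff (m - (s + 1)) (((1 - X : PowerSeries ℚ)⁻¹) ^ (s + 1)) =
          ((s + (m - (s + 1))).choose s : ℚ) := by
        rw [hinv1, PowerSeries.mk_one_pow_eq_mk_choose_add ℚ s, coeff_mk]
      rw [hcoeffC, hcoeffG]
      have f1 : s + (m - (s + 1)) = m - 1 := by omega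
      rw [f1]
      rcases eq_or_lt_of_le htm with heq | hlt
      · -- s + 1 = m
        subst heq
        rw [zchoose, zchoose, zchoose, if_pos (by constructor <;> push_cast <;> omega),
          if_neg (by push_cast; omega), if_pos (by constructor <;> push_cast <;> omega)]
        rw [Nat.sub_self, bal_zero]
        have g1 : ((2 * ((s + 1 + 1 : ℕ) : ℤ) - 3)).toNat = 2 * s + 1 := by omega
        have g2 : (((s + 1 + 1 : ℕ) : ℤ) - ((s + 1 : ℕ) : ℤ) - 1).toNat = 0 := by omega
        have g3 : (((s + 1 + 1 : ℕ) : ℤ) - 2).toNat = s := by omega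
        have g4 : (((s + 1 : ℕ) : ℤ) - 1).toNat = s := by omega
        rw [g1, g2, g3, g4, Nat.choose_zero_right]
        have g5 : (s + 1) - 1 = s := by omega
        rw [g5, Nat.choose_self]
        push_cast
        ring
      · -- s + 1 < m
        rw [zchoose, zchoose, zchoose, if_pos (by constructor <;> push_cast <;> omega),
          if_pos (by constructor <;> push_cast <;> omega),
          if_pos (by constructor <;> push_cast <;> omega)]
        have g1 : (2 * ((m + 1 : ℕ) : ℤ) - 3).toNat = 2 * m - 1 := by omega
        have g2 : (((m + 1 : ℕ) : ℤ) - ((s + 1 : ℕ) : ℤ) - 1).toNat = m - s - 1 := by omega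
        have g2' : (((m + 1 : ℕ) : ℤ) - ((s + 1 : ℕ) : ℤ) - 2).toNat = m - s - 2 := by omega
        have g3 : (((m + 1 : ℕ) : ℤ) - 2).toNat = m - 1 := by omega
        have g4 : (((s + 1 : ℕ) : ℤ) - 1).toNat = s := by omega
        rw [g1, g2, g2', g3, g4]
        have hb : bal (2 * (s + 1)) (m - (s + 1)) =
            ((2 * m - 1).choose (m - s - 1) : ℚ) - ((2 * m - 1).choose (m - s - 2) : ℚ) := by
          have hne : m - (s + 1) ≠ 0 := by omega
          rw [bal, if_neg hne]
          have i1 : 2 * (m - (s + 1)) + 2 * (s + 1) - 1 = 2 * m - 1 := by omega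
          have i2 : m - (s + 1) = m - s - 1 := by omega
          have i3 : m - (s + 1) - 1 = m - s - 2 := by omega
          rw [i1, i3, i2]
        rw [hb]
        push_cast
        ring
    · -- t > m : everything vanishes
      rw [hsplit, PowerSeries.coeff_X_pow_mul', PowerSeries.coeff_X_pow_mul',
        if_neg (by omega), if_neg (by omega)]
      rw [zchoose, zchoose, zchoose, if_neg (by push_cast; omega),
        if_neg (by push_cast; omega), if_neg (by push_cast; omega)]
      norm_num
end

section
/- Let C(z) satisfy C(z) = 1 + 2z C(z) + z² C(z)². For positive integers n, f and non-negative integer t, the coefficient of z^n in (zC(z))^{f+t+2}/(1+zC(z))² equals C(2n-3, n-f-t-2) − C(2n-3, n-f-t-3). -/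
/-- Ballot-type numbers: `[z^j] D^k` where `D` is the Catalan generating function. -/
noncomputable def bb (j k : ℕ) : ℚ :=
  if j = 0 then 1 else ((2*j+k-1).choose j : ℚ) - ((2*j+k-1).choose (j-1) : ℚ)

lemma bb_rec (j k : ℕ) : bb (j+1) (k+1) = bb (j+1) k + bb j (k+2) := by
  rcases j with _ | j
  · simp only [bb, if_neg (Nat.one_ne_zero), if_pos rfl]
    have h1 : 2*1+(k+1)-1 = k+2 := by omega
    have h2 : 2*1+k-1 = k+1 := by omega
    rw [h1, h2]
    simp [Nat.choose_one_right]
    push_cast; ring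
  · simp only [bb, if_neg (Nat.succ_ne_zero _)]
    have h1 : 2*(j+2)+(k+1)-1 = (2*j+k+3)+1 := by omega
    have h2 : 2*(j+2)+k-1 = 2*j+k+3 := by omega
    have h3 : 2*(j+1)+(k+2)-1 = 2*j+k+3 := by omega
    rw [h1, h2, h3]
    have p1 : ((2*j+k+3)+1).choose (j+2) = (2*j+k+3).choose (j+1) + (2*j+k+3).choose (j+2) :=
      Nat.choose_succ_succ _ _
    have p2 : ((2*j+k+3)+1).choose (j+1) = (2*j+k+3).choose j + (2*j+k+3).choose (j+1) :=
      Nat.choose_succ_succ _ _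
    simp only [Nat.add_sub_cancel] at p1 p2 ⊢
    rw [p1, p2]
    push_cast; ring

open PowerSeries in
lemma coeff_pow_catalan (D : PowerSeries ℚ) (hD : D = 1 + X * D^2) :
    ∀ j k, PowerSeries.coeff j (D^k) = bb j k := by
  have hc : constantCoeff D = 1 := by
    rw [hD]; simp
  have hrec : ∀ j k : ℕ, coeff (j+1) (D^(k+1)) = coeff (j+1) (D^k) + coeff j (D^(k+2)) := by
    intro j k
    have : D^(k+1) = D^k + X * D^(k+2) := by
      calc D^(k+1) = D^k * D := by ring
        _ = D^k * (1 + X * D^2) := by rw [← hD]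
        _ = D^k + X * D^(k+2) := by ring
    rw [this, map_add, coeff_succ_X_mul]
  intro j
  induction j using Nat.strong_induction_on with
  | _ j ih =>
    match j with
    | 0 =>
      intro k
      have : coeff 0 (D^k) = constantCoeff (D^k) := by
        simp [PowerSeries.coeff_zero_eq_constantCoeff]
      rw [this, map_pow, hc, one_pow]
      simp [bb]
    | j+1 =>
      intro k
      induction k with
      | zero =>
        simp only [pow_zero, bb, if_neg (Nat.succ_ne_zero j)]
        rw [PowerSeries.coeff_one, if_neg (Nat.succ_ne_zero j)]
        have h1 : 2*(j+1)+0-1 = 2*j+1 := by omega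
        rw [h1]
        simp only [Nat.add_sub_cancel]
        have hsymm : (2*j+1).choose (j+1) = (2*j+1).choose j := by
          have h := Nat.choose_symm (show j ≤ 2*j+1 by omega)
          have : 2*j+1-j = j+1 := by omega
          rw [this] at h
          exact h
        rw [hsymm, sub_self]
      | succ k ihk =>
        rw [hrec j k, ihk, ih j (by omega) (k+2), bb_rec]

open PowerSeries in
/-- If `C(z)` satisfies `C = 1 + 2zC + z²C²`, then for positive integers `n`, `f` and
non-negative `t`, the coefficient of `z^n` in `(zC)^{f+t+2}/(1+zC)²` equals
`C(2n-3,n-f-t-2) − C(2n-3,n-f-t-3)`. -/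
theorem coeff_motzkin_term3 (C : PowerSeries ℚ)
    (hC : C = 1 + 2 * X * C + X ^ 2 * C ^ 2) (n f t : ℕ) (hn : 1 ≤ n) (hf : 1 ≤ f) :
    PowerSeries.coeff n ((X * C) ^ (f + t + 2) * ((1 + X * C) ^ 2)⁻¹) =
      ((zchoose (2 * (n : ℤ) - 3) ((n : ℤ) - f - t - 2)
        - zchoose (2 * (n : ℤ) - 3) ((n : ℤ) - f - t - 3) : ℤ) : ℚ) := by
  set m : ℕ := f + t + 2 with hm
  set D : PowerSeries ℚ := 1 + X * C with hDdef
  have hD : D = 1 + X * D^2 := by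
    have : (1 : PowerSeries ℚ) + X * (1 + X*C)^2 = 1 + X * (1 + 2*X*C + X^2*C^2) := by ring
    rw [hDdef, this, ← hC]
  have hcD : constantCoeff D = 1 := by rw [hD]; simp
  have hXC : X * C = X * D^2 := by
    have h1 : X * C = D - 1 := by rw [hDdef]; ring
    linear_combination h1 + hD
  have hinv : D^2 * (D^2)⁻¹ = 1 := by
    apply PowerSeries.mul_inv_cancel
    rw [map_pow, hcD, one_pow]; exact one_ne_zero
  have key : (X * C) ^ m * ((1 + X * C) ^ 2)⁻¹ = X^m * D^(2*m-2) := by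
    rw [show (1 : PowerSeries ℚ) + X * C = D from hDdef.symm, hXC]
    have h2 : (X * D^2)^m = X^m * D^(2*m) := by rw [mul_pow, ← pow_mul]
    rw [h2]
    have h3 : D^(2*m) = D^(2*m-2) * D^2 := by
      rw [← pow_add]; congr 1 <;> omega
    rw [h3, mul_assoc, mul_assoc, hinv, mul_one]
  rw [key, PowerSeries.coeff_X_pow_mul']
  by_cases hnm : m ≤ n
  · rw [if_pos hnm, coeff_pow_catalan D hD]
    have hz1 : (n : ℤ) - f - t - 2 = ((n - m : ℕ) : ℤ) := by push_cast; omega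
    have hz2 : 2 * (n : ℤ) - 3 = ((2*n - 3 : ℕ) : ℤ) := by push_cast; omega
    rcases Nat.eq_zero_or_pos (n - m) with h0 | hpos
    · rw [h0]
      simp only [bb, if_pos rfl]
      have e1 : zchoose (2 * (n : ℤ) - 3) ((n : ℤ) - f - t - 2) = 1 := by
        rw [hz1, h0, zchoose]
        rw [if_pos ⟨le_refl 0, by omega⟩]
        simp
      have e2 : zchoose (2 * (n : ℤ) - 3) ((n : ℤ) - f - t - 3) = 0 := by
        rw [zchoose, if_neg]
        push_neg
        intro h; exfalso; omega
      rw [e1, e2]; norm_num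
    · simp only [bb, if_neg (Nat.pos_iff_ne_zero.mp hpos)]
      have e1 : zchoose (2 * (n : ℤ) - 3) ((n : ℤ) - f - t - 2)
          = ((2*n-3).choose (n-m) : ℤ) := by
        rw [hz1, hz2, zchoose, if_pos ⟨by positivity, by omega⟩]
        congr 1 <;> simp [Int.toNat_natCast]
      have e2 : zchoose (2 * (n : ℤ) - 3) ((n : ℤ) - f - t - 3)
          = ((2*n-3).choose (n-m-1) : ℤ) := by
        have hz3 : (n : ℤ) - f - t - 3 = ((n - m - 1 : ℕ) : ℤ) := by push_cast; omega
        rw [hz3, hz2, zchoose, if_pos ⟨by positivity, by omega⟩]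
        congr 1 <;> simp [Int.toNat_natCast]
      rw [e1, e2]
      have harg : 2*(n-m)+(2*m-2)-1 = 2*n-3 := by omega
      rw [harg]
      push_cast; ring
  · rw [if_neg hnm]
    have e1 : zchoose (2 * (n : ℤ) - 3) ((n : ℤ) - f - t - 2) = 0 := by
      rw [zchoose, if_neg]; push_neg; intro h; exfalso; omega
    have e2 : zchoose (2 * (n : ℤ) - 3) ((n : ℤ) - f - t - 3) = 0 := by
      rw [zchoose, if_neg]; push_neg; intro h; exfalso; omega
    rw [e1, e2]; norm_num
end

section
/- Let C(z) satisfy C(z) = 1 + 2z C(z) + z² C(z)². For a positive integer n and integers t ≥ f ≥ 1, the coefficient of z^n in (1/(1+zC(z)))·((zC(z))^{t−f+2} − (zC(z))^{f+t+2})/(1−z²C(z)²) equals C(2n-3, n+f-t-2) − C(2n-3, n-f-t-2). -/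
lemma zchoose_of_neg {a b : ℤ} (h : b < 0) : zchoose a b = 0 := by
  simp [zchoose, not_le.mpr h]

lemma zchoose_of_lt {a b : ℤ} (h : a < b) : zchoose a b = 0 := by
  simp only [zchoose, ite_eq_right_iff, and_imp]
  intro _ h2; omega

lemma zchoose_nat (a b : ℕ) : zchoose a b = a.choose b := by
  by_cases h : b ≤ a
  · simp [zchoose, Int.ofNat_le.mpr h]
  · rw [zchoose_of_lt (by exact_mod_cast not_le.mp h), Nat.choose_eq_zero_of_lt (not_le.mp h)]
    simp

lemma zchoose_pascal (a : ℕ) (b : ℤ) :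
    zchoose ((a : ℤ) + 1) b = zchoose a b + zchoose a (b - 1) := by
  rcases lt_trichotomy b 0 with hb | hb | hb
  · rw [zchoose_of_neg hb, zchoose_of_neg hb, zchoose_of_neg (by omega)]; ring
  · subst hb
    rw [show (0 : ℤ) - 1 = -1 by ring, zchoose_of_neg (show (-1:ℤ) < 0 by norm_num)]
    simp [zchoose]; omega
  · obtain ⟨c, rfl⟩ : ∃ c : ℕ, b = (c : ℤ) + 1 := ⟨(b - 1).toNat, by omega⟩
    rw [show ((c : ℤ) + 1 - 1) = ((c : ℕ) : ℤ) by push_cast; ring,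
      show ((a : ℤ) + 1) = ((a + 1 : ℕ) : ℤ) by push_cast; ring,
      show ((c : ℤ) + 1) = ((c + 1 : ℕ) : ℤ) by push_cast; ring,
      zchoose_nat, zchoose_nat, zchoose_nat]
    rw [Nat.choose_succ_succ]
    push_cast; ring

lemma zchoose_symm_s11 (a : ℕ) (b : ℤ) (hb : 0 ≤ b) (hba : b ≤ a) :
    zchoose a b = zchoose a ((a : ℤ) - b) := by
  obtain ⟨c, rfl⟩ : ∃ c : ℕ, b = (c : ℤ) := ⟨b.toNat, by omega⟩
  rw [show ((a : ℤ) - c) = ((a - c : ℕ) : ℤ) by omega, zchoose_nat, zchoose_nat]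
  rw [Nat.choose_symm (by exact_mod_cast hba)]

lemma catalan_zchoose (N : ℕ) :
    (catalan N : ℤ) = zchoose (2*N) N - zchoose (2*N) ((N:ℤ)-1) := by
  cases N with
  | zero => simp [zchoose_of_neg (show (0:ℤ)-1 < 0 by norm_num), zchoose]
  | succ M =>
    set N := M + 1 with hN
    have e1 : (2*(N:ℤ)) = ((2*N : ℕ) : ℤ) := by push_cast; ring
    have e2 : ((N:ℤ)-1) = ((M:ℕ) : ℤ) := by push_cast [hN]; ring
    rw [e1, e2, zchoose_nat, zchoose_nat]
    have h1 : ((N+1) * catalan N : ℤ) = ((2*N).choose N : ℤ) := by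
      exact_mod_cast congrArg (Nat.cast (R := ℤ)) (succ_mul_catalan_eq_centralBinom N)
    have h2' := Nat.choose_succ_right_eq (2*N) M
    have hM1 : M + 1 = N := rfl
    have hM2 : 2*N - M = N + 1 := by omega
    rw [hM1, hM2] at h2'
    have h2 : ((2*N).choose N * N : ℤ) = ((2*N).choose M * (N+1) : ℤ) := by exact_mod_cast h2'
    have hne : ((N:ℤ)+1) ≠ 0 := by positivity
    apply mul_left_cancel₀ hne
    push_cast at h1 h2 ⊢
    linear_combination h1 - h2

lemma zchoose_step (n J : ℤ) (hn : 1 ≤ n) (hJ : J ≤ n - 2) :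
    zchoose (2*n-2) J - zchoose (2*n-2) (J-1) = zchoose (2*n-3) J - zchoose (2*n-3) (J-2) := by
  rcases lt_or_ge J 0 with h | h
  · rw [zchoose_of_neg h, zchoose_of_neg (show J-1 < 0 by omega), zchoose_of_neg h,
      zchoose_of_neg (show J-2 < 0 by omega)]
  · obtain ⟨A, hA⟩ : ∃ A : ℕ, 2*n-3 = (A:ℤ) := ⟨(2*n-3).toNat, by omega⟩
    rw [show 2*n-2 = (A:ℤ)+1 by omega, hA, zchoose_pascal, zchoose_pascal,
      show J - 1 - 1 = J - 2 from by ring]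
    ring

lemma tele (n a : ℤ) (hn : 1 ≤ n) (ha : 2 ≤ a) (f : ℕ) :
    ∑ k ∈ Finset.range f,
        (zchoose (2*n-2) (n - a - 2*k) - zchoose (2*n-2) (n - a - 2*k - 1))
      = zchoose (2*n-3) (n - a) - zchoose (2*n-3) (n - a - 2*f) := by
  induction f with
  | zero => simp
  | succ f ih =>
    rw [Finset.sum_range_succ, ih,
      zchoose_step n (n - a - 2*f) hn (by omega)]
    have : n - a - 2*(f:ℤ) - 2 = n - a - 2*((f:ℕ)+1 : ℤ) := by ring
    rw [this]
    push_cast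
    ring

open PowerSeries

lemma coeff_W_catalan (W : PowerSeries ℚ) (hW : W = 1 + X * W ^ 2) (N : ℕ) :
    coeff N W = catalan N := by
  induction N using Nat.strong_induction_on with
  | _ N ih =>
    cases N with
    | zero =>
      conv_lhs => rw [hW]
      simp
    | succ M =>
      conv_lhs => rw [hW]
      rw [map_add, coeff_succ_X_mul, coeff_one, if_neg (Nat.succ_ne_zero M), zero_add,
        sq, coeff_mul, catalan_succ']
      push_cast
      refine Finset.sum_congr rfl fun p hp => ?_
      have hps := Finset.HasAntidiagonal.mem_antidiagonal.mp hp
      rw [ih p.1 (by omega), ih p.2 (by omega)]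

lemma zstep (s N : ℕ) :
    (zchoose (2*(N:ℤ)+s+2) ((N:ℤ)+1) - zchoose (2*(N:ℤ)+s+2) N)
      - (zchoose (2*(N:ℤ)+s+1) ((N:ℤ)+1) - zchoose (2*(N:ℤ)+s+1) N)
    = zchoose (2*(N:ℤ)+s+1) N - zchoose (2*(N:ℤ)+s+1) ((N:ℤ)-1) := by
  obtain ⟨A, hA⟩ : ∃ A : ℕ, (A:ℤ) = 2*(N:ℤ)+s+1 := ⟨2*N+s+1, by push_cast; ring⟩
  rw [show 2*(N:ℤ)+s+2 = (A:ℤ)+1 by omega, ← hA, zchoose_pascal,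
    zchoose_pascal, show (N:ℤ)+1-1 = (N:ℤ) by ring]
  ring

lemma coeff_W_pow_pos (W : PowerSeries ℚ) (hW : W = 1 + X * W ^ 2) :
    ∀ r N : ℕ, 1 ≤ N → coeff N (W ^ r) =
      ((zchoose (2*(N:ℤ)+(r:ℤ)-1) N - zchoose (2*(N:ℤ)+(r:ℤ)-1) ((N:ℤ)-1) : ℤ) : ℚ) := by
  intro r
  induction r using Nat.strong_induction_on with
  | _ r ih =>
    match r with
    | 0 =>
      intro N hN
      obtain ⟨A, hA⟩ : ∃ A : ℕ, (A:ℤ) = 2*(N:ℤ)+(0:ℕ)-1 := ⟨2*N-1, by push_cast [hN]; omega⟩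
      rw [pow_zero, coeff_one, if_neg (by omega), ← hA,
        zchoose_symm_s11 A N (by positivity) (by omega),
        show (A:ℤ) - N = (N:ℤ)-1 by omega]
      simp
    | 1 =>
      intro N hN
      rw [pow_one, coeff_W_catalan W hW N,
        show 2*(N:ℤ)+((1:ℕ):ℤ)-1 = 2*(N:ℤ) by push_cast; ring]
      exact_mod_cast catalan_zchoose N
    | (s+2) =>
      intro N hN
      have hrel : W ^ (s+1) = W ^ s + X * W ^ (s+2) := by
        linear_combination (W ^ s : PowerSeries ℚ) * hW
      have hco : coeff N (W ^ (s+2)) =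
          coeff (N+1) (W ^ (s+1)) - coeff (N+1) (W ^ s) := by
        have := congrArg (coeff (N+1)) hrel
        rw [map_add, coeff_succ_X_mul] at this
        linarith [this]
      rw [hco, ih (s+1) (by omega) (N+1) (by omega), ih s (by omega) (N+1) (by omega)]
      have hz := zstep s N
      push_cast
      push_cast at hz
      rw [show 2*((N:ℤ)+1)+((s:ℤ)+1)-1 = 2*(N:ℤ)+s+2 by ring,
        show 2*((N:ℤ)+1)+(s:ℤ)-1 = 2*(N:ℤ)+s+1 by ring,
        show 2*(N:ℤ)+((s:ℤ)+2)-1 = 2*(N:ℤ)+s+1 by ring,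
        show (N:ℤ)+1-1 = (N:ℤ) by ring]
      exact_mod_cast hz

lemma coeff_W_pow_all (W : PowerSeries ℚ) (hW : W = 1 + X * W ^ 2) (r N : ℕ) (hr : 1 ≤ r) :
    coeff N (W ^ r) =
      ((zchoose (2*(N:ℤ)+(r:ℤ)-1) N - zchoose (2*(N:ℤ)+(r:ℤ)-1) ((N:ℤ)-1) : ℤ) : ℚ) := by
  cases N with
  | zero =>
    have hc : constantCoeff W = 1 := by rw [hW]; simp
    rw [coeff_zero_eq_constantCoeff, map_pow, hc, one_pow]
    obtain ⟨A, hA⟩ : ∃ A : ℕ, (A:ℤ) = 2*((0:ℕ):ℤ)+(r:ℤ)-1 := ⟨r-1, by push_cast [hr]; omega⟩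
    rw [← hA, zchoose_of_neg (show ((0:ℕ):ℤ)-1 < 0 by norm_num),
      show ((0:ℕ):ℤ) = ((0:ℕ):ℤ) from rfl, zchoose_nat]
    simp
  | succ M => exact coeff_W_pow_pos W hW r (M+1) (by omega)

open PowerSeries in
/-- If `C(z)` satisfies `C = 1 + 2zC + z²C²`, then for a positive integer `n` and
integers `t ≥ f ≥ 1`, the coefficient of `z^n` in
`(1/(1+zC))·((zC)^{t−f+2} − (zC)^{f+t+2})/(1−z²C²)` equals
`C(2n-3,n+f-t-2) − C(2n-3,n-f-t-2)`. -/
theorem coeff_motzkin_term5 (C : PowerSeries ℚ)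
    (hC : C = 1 + 2 * X * C + X ^ 2 * C ^ 2) (n f t : ℕ) (hn : 1 ≤ n) (hf : 1 ≤ f)
    (htf : f ≤ t) :
    PowerSeries.coeff n
        ((1 + X * C)⁻¹ * (((X * C) ^ (t - f + 2) - (X * C) ^ (f + t + 2))
          * (1 - X ^ 2 * C ^ 2)⁻¹)) =
      ((zchoose (2 * (n : ℤ) - 3) ((n : ℤ) + f - t - 2)
        - zchoose (2 * (n : ℤ) - 3) ((n : ℤ) - f - t - 2) : ℤ) : ℚ) := by
  have hCW : C = (1 + X * C) ^ 2 := by linear_combination hC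
  set W : PowerSeries ℚ := 1 + X * C with hWdef
  clear_value W
  have hW : W = 1 + X * W ^ 2 := by
    linear_combination hWdef + X * hCW
  have hWinv : (1 - X * W) * W = 1 := by linear_combination hW
  have hWc : constantCoeff W ≠ 0 := by rw [hWdef]; simp
  have hinv1 : W⁻¹ = 1 - X * W := by
    rw [PowerSeries.inv_eq_iff_mul_eq_one hWc]; exact hWinv
  have h2c : constantCoeff (1 - X ^ 2 * C ^ 2) ≠ 0 := by simp
  set a : ℕ := t - f + 2 with hadef
  have ha2 : 2 ≤ a := by omega
  have hab : f + t + 2 = a + 2 * f := by omega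
  have hXC : (X * C : PowerSeries ℚ) = X * W ^ 2 := by rw [hCW]
  -- geometric sum
  have hsum : (∑ k ∈ Finset.range f, (X * C : PowerSeries ℚ) ^ (a + 2 * k))
      = (X * C) ^ a * ∑ k ∈ Finset.range f, ((X * C) ^ 2) ^ k := by
    rw [Finset.mul_sum]
    exact Finset.sum_congr rfl fun k _ => by rw [pow_add, pow_mul]
  have hg := geom_sum_mul ((X * C : PowerSeries ℚ) ^ 2) f
  have hgeo : (X * C : PowerSeries ℚ) ^ a - (X * C) ^ (f + t + 2)
      = (∑ k ∈ Finset.range f, (X * C) ^ (a + 2 * k)) * (1 - X ^ 2 * C ^ 2) := by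
    rw [hab, hsum]
    linear_combination ((X * C : PowerSeries ℚ) ^ a) * hg
  rw [hgeo, mul_assoc, PowerSeries.mul_inv_cancel _ h2c, mul_one, hinv1, Finset.mul_sum]
  -- per-term rewriting
  have hterm : ∀ m : ℕ, 1 ≤ m →
      (1 - X * W) * (X * C : PowerSeries ℚ) ^ m = X ^ m * W ^ (2 * m - 1) := by
    intro m hm
    obtain ⟨m', rfl⟩ : ∃ m', m = m' + 1 := ⟨m - 1, by omega⟩
    rw [hXC, show 2 * (m' + 1) - 1 = 2 * m' + 1 from by omega]
    linear_combination (X ^ (m' + 1) * W ^ (2 * m' + 1) : PowerSeries ℚ) * hWinv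
  have hcoeff : ∀ m : ℕ, 2 ≤ m → coeff n (X ^ m * W ^ (2 * m - 1)) =
      ((zchoose (2 * (n : ℤ) - 2) ((n : ℤ) - m)
        - zchoose (2 * (n : ℤ) - 2) ((n : ℤ) - m - 1) : ℤ) : ℚ) := by
    intro m hm
    rw [PowerSeries.coeff_X_pow_mul']
    by_cases hmn : m ≤ n
    · rw [if_pos hmn, coeff_W_pow_all W hW (2 * m - 1) (n - m) (by omega)]
      congr 2
      · congr 1 <;> push_cast [Nat.cast_sub hmn, Nat.cast_sub (show 1 ≤ 2 * m by omega)] <;> omega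
      · congr 1
        · push_cast [Nat.cast_sub hmn, Nat.cast_sub (show 1 ≤ 2 * m by omega)]; omega
        · push_cast [Nat.cast_sub hmn]; omega
    · rw [if_neg hmn, zchoose_of_neg (show (n : ℤ) - m < 0 by omega),
        zchoose_of_neg (show (n : ℤ) - m - 1 < 0 by omega)]
      norm_num
  have hstep : ∀ k ∈ Finset.range f,
      coeff n ((1 - X * W) * (X * C) ^ (a + 2 * k)) =
      ((zchoose (2 * (n : ℤ) - 2) ((n : ℤ) - a - 2 * k)
        - zchoose (2 * (n : ℤ) - 2) ((n : ℤ) - a - 2 * k - 1) : ℤ) : ℚ) := by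
    intro k _
    rw [hterm (a + 2 * k) (by omega), hcoeff (a + 2 * k) (by omega)]
    congr 2 <;> [skip; congr 1] <;> push_cast <;> ring_nf
  rw [map_sum, Finset.sum_congr rfl hstep]
  have ht := tele (n : ℤ) (a : ℤ) (by exact_mod_cast hn) (by exact_mod_cast ha2) f
  have hac : (a : ℤ) = (t : ℤ) - f + 2 := by push_cast [hadef, Nat.cast_sub htf]; ring
  rw [show ((n : ℤ) + f - t - 2) = (n : ℤ) - a by omega,
    show ((n : ℤ) - f - t - 2) = (n : ℤ) - a - 2 * f by omega, ← ht]
  push_cast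
  ring
end

section
/- In the ring of formal power series, let C(z) satisfy C(z) = 1 + 2z C(z) + z² C(z)². Then for positive integers n ≥ 2 and t ≥ 1, the residue (coefficient of z^{-1}) of (z/(1+z+z²))^t · (1+z)^{2n-3}(1-z)/z^n equals C(n-2, n-t-1); equivalently, under the substitution v = z/(1+z+z²), this residue transforms into the coefficient of v^{n-t-1} in (1+v)^{n-2}. -/
namespace ResAux
open HahnSeries
noncomputable abbrev z : LaurentSeries ℚ := HahnSeries.single (1 : ℤ) (1 : ℚ)
noncomputable abbrev w : LaurentSeries ℚ := 1 + z + z ^ 2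

lemma z_ne : z ≠ 0 := single_ne_zero one_ne_zero

lemma z_sq : z ^ 2 = HahnSeries.single (2 : ℤ) (1 : ℚ) := by
  rw [single_pow]; norm_num

lemma coeff_single_mul (k : ℤ) (x : LaurentSeries ℚ) (a : ℤ) :
    (HahnSeries.single k (1:ℚ) * x).coeff a = x.coeff (a - k) := by
  have h := coeff_single_mul_add (b := k) (r := (1:ℚ)) (x := x) (a := a - k)
  rw [sub_add_cancel, one_mul] at h
  exact h

lemma coeff_z_mul (x : LaurentSeries ℚ) (a : ℤ) : (z * x).coeff a = x.coeff (a - 1) :=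
  coeff_single_mul 1 x a

lemma coeff_w_mul (x : LaurentSeries ℚ) (a : ℤ) :
    (w * x).coeff a = x.coeff a + x.coeff (a - 1) + x.coeff (a - 2) := by
  rw [show w = 1 + z + z ^ 2 from rfl, add_mul, add_mul, one_mul, coeff_add, coeff_add,
    coeff_z_mul, z_sq, coeff_single_mul]

lemma w_coeff_zero : w.coeff 0 = 1 := by
  simp [z_sq, coeff_add, coeff_one, coeff_single]

lemma w_ne : w ≠ 0 := ne_zero_of_coeff_ne_zero (by rw [w_coeff_zero]; norm_num)

lemma c_symm (s : ℕ) (k : ℤ) : (w ^ s).coeff k = (w ^ s).coeff (2 * s - k) := by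
  induction s generalizing k with
  | zero =>
    have h : (2 * ((0:ℕ):ℤ) - k = 0) ↔ (k = 0) := by omega
    simp [coeff_one, h]
  | succ s ih =>
    have h1 := ih k
    have h2 := ih (k - 1)
    have h3 := ih (k - 2)
    rw [pow_succ', coeff_w_mul, coeff_w_mul, h1, h2, h3]
    have a1 : 2 * (s:ℤ) - (k - 2) = 2 * ((s:ℕ)+1:ℤ) - k := by ring
    have a2 : 2 * (s:ℤ) - (k - 1) = 2 * ((s:ℕ)+1:ℤ) - k - 1 := by ring
    have a3 : 2 * (s:ℤ) - k = 2 * ((s:ℕ)+1:ℤ) - k - 2 := by ring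
    push_cast
    push_cast at a1 a2 a3
    rw [a1, a2, a3]
    ring

lemma order_eq_zero_of {x : LaurentSeries ℚ} (h0 : x.coeff 0 ≠ 0)
    (hneg : ∀ i < (0:ℤ), x.coeff i = 0) : x.order = 0 := by
  have hx : x ≠ 0 := ne_zero_of_coeff_ne_zero h0
  have h1 : x.order ≤ 0 := order_le_of_coeff_ne_zero h0
  rcases lt_or_eq_of_le h1 with h | h
  · exact absurd (hneg _ h) (coeff_order_eq_zero.not.mpr hx)
  · exact h

lemma order_w : w.order = 0 := by
  apply order_eq_zero_of (by rw [w_coeff_zero]; norm_num)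
  intro i hi
  simp only [z_sq, coeff_add, coeff_one, coeff_single]
  have : ¬ (i = 0) := by omega
  have : ¬ (i = 1) := by omega
  have : ¬ (i = 2) := by omega
  simp_all

lemma order_inv {x : LaurentSeries ℚ} (hx : x ≠ 0) : (x⁻¹).order = -x.order := by
  have h := order_mul (inv_ne_zero hx) hx
  rw [inv_mul_cancel₀ hx, order_one] at h
  omega

lemma order_w_zpow (e : ℤ) : (w ^ e).order = 0 := by
  obtain ⟨n, rfl | rfl⟩ := e.eq_nat_or_neg
  · rw [zpow_natCast, order_pow, order_w, smul_zero]
  · rw [zpow_neg, zpow_natCast, order_inv (pow_ne_zero _ w_ne), order_pow, order_w, smul_zero,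
      neg_zero]

lemma winv_coeff_zero : (w⁻¹).coeff 0 = 1 := by
  have h := coeff_mul_order_add_order (w⁻¹) w
  rw [order_inv w_ne, order_w, neg_zero, add_zero, inv_mul_cancel₀ w_ne,
    leadingCoeff_eq, leadingCoeff_eq, order_inv w_ne, order_w, neg_zero, w_coeff_zero,
    mul_one, coeff_one] at h
  simpa using h.symm


noncomputable def g (m : ℕ) (r : ℤ) : LaurentSeries ℚ :=
  (1 + z) ^ (2 * m + 1) * (1 - z) * w ^ (r - m - 1)

lemma one_add_z_ne : (1 + z : LaurentSeries ℚ) ≠ 0 := by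
  apply ne_zero_of_coeff_ne_zero (g := 0)
  simp [coeff_add, coeff_one, coeff_single]

lemma one_sub_z_ne : (1 - z : LaurentSeries ℚ) ≠ 0 := by
  apply ne_zero_of_coeff_ne_zero (g := 0)
  simp [coeff_sub, coeff_one, coeff_single]

lemma order_one_add_z : (1 + z : LaurentSeries ℚ).order = 0 := by
  apply order_eq_zero_of (by simp [coeff_add, coeff_one, coeff_single])
  intro i hi
  have h1 : ¬ (i = 0) := by omega
  have h2 : ¬ (i = 1) := by omega
  simp [coeff_add, coeff_one, coeff_single, h1, h2]

lemma order_one_sub_z : (1 - z : LaurentSeries ℚ).order = 0 := by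
  apply order_eq_zero_of (by simp [coeff_sub, coeff_one, coeff_single])
  intro i hi
  have h1 : ¬ (i = 0) := by omega
  have h2 : ¬ (i = 1) := by omega
  simp [coeff_sub, coeff_one, coeff_single, h1, h2]

lemma order_g (m : ℕ) (r : ℤ) : (g m r).order = 0 := by
  rw [g, order_mul (mul_ne_zero (pow_ne_zero _ one_add_z_ne) one_sub_z_ne)
      (zpow_ne_zero _ w_ne),
    order_mul (pow_ne_zero _ one_add_z_ne) one_sub_z_ne,
    order_pow, order_one_add_z, order_one_sub_z, order_w_zpow, smul_zero]
  ring

lemma g_coeff_neg (m : ℕ) {r r' : ℤ} (h : r' < 0) : (g m r).coeff r' = 0 :=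
  coeff_eq_zero_of_lt_order (by rw [order_g]; exact h)

lemma g_pascal (m : ℕ) (r : ℤ) : g (m + 1) r = g m r + z * g m (r - 1) := by
  have key : w ^ (r - (m:ℤ) - 1) = w ^ (r - ((m:ℕ)+1:ℤ) - 1) * w := by
    rw [← zpow_add_one₀ w_ne]; congr 1; push_cast; ring
  have key2 : w ^ (r - 1 - (m:ℤ) - 1) = w ^ (r - ((m:ℕ)+1:ℤ) - 1) := by
    congr 1; push_cast; ring
  simp only [g, key, key2]
  have hp : (2 * (m + 1) + 1) = (2 * m + 1) + 2 := by omega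
  rw [hp, _root_.pow_add]
  push_cast
  ring

lemma g_coeff_pascal (m : ℕ) (r : ℤ) :
    (g (m + 1) r).coeff r = (g m r).coeff r + (g m (r - 1)).coeff (r - 1) := by
  rw [g_pascal, coeff_add, coeff_z_mul]

lemma zchoose_nat (a b : ℕ) : zchoose a b = a.choose b := by
  simp only [zchoose, Int.toNat_natCast]
  split_ifs with h
  · rfl
  · symm
    norm_cast
    exact Nat.choose_eq_zero_of_lt (by omega)

lemma zchoose_neg {a b : ℤ} (h : b < 0) : zchoose a b = 0 := by
  simp only [zchoose]
  rw [if_neg (by omega)]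

lemma zchoose_pascal (m : ℕ) (r : ℤ) :
    zchoose ((m:ℤ) + 1) r = zchoose m r + zchoose m (r - 1) := by
  rcases lt_trichotomy r 0 with h | h | h
  · rw [zchoose_neg h, zchoose_neg h, zchoose_neg (show r - 1 < 0 by omega)]; ring
  · subst h
    have h1 : zchoose (m:ℤ) (0 - 1) = 0 := zchoose_neg (by norm_num)
    have h2 : zchoose ((m:ℤ) + 1) 0 = 1 := by
      have h := zchoose_nat (m+1) 0; push_cast at h; simpa using h
    have h3 : zchoose (m:ℤ) 0 = 1 := by
      have h := zchoose_nat m 0; push_cast at h; simpa using h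
    rw [h1, h2, h3]; ring
  · obtain ⟨s, rfl⟩ : ∃ s : ℕ, r = (s:ℤ) + 1 := ⟨(r - 1).toNat, by omega⟩
    rw [show ((s:ℤ) + 1 - 1) = (s:ℤ) from by ring]
    have h1 : zchoose ((m:ℤ) + 1) ((s:ℤ) + 1) = ((m+1).choose (s+1) : ℤ) := by
      have h := zchoose_nat (m+1) (s+1); push_cast at h; simpa using h
    have h2 : zchoose (m:ℤ) ((s:ℤ) + 1) = (m.choose (s+1) : ℤ) := by
      have h := zchoose_nat m (s+1); push_cast at h; simpa using h
    have h3 : zchoose (m:ℤ) ((s:ℤ)) = (m.choose s : ℤ) := zchoose_nat m s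
    rw [h1, h2, h3, Nat.choose_succ_succ']
    push_cast; ring

lemma g_zero_coeff (r : ℤ) : (g 0 r).coeff r = (zchoose 0 r : ℚ) := by
  rcases lt_trichotomy r 0 with h | h | h
  · rw [g_coeff_neg 0 h, zchoose_neg h]; norm_cast
  · subst h
    have hg : g 0 0 = (w⁻¹) - z ^ 2 * (w⁻¹) := by
      rw [g]
      rw [show ((0:ℤ) - ((0:ℕ):ℤ) - 1) = -1 by norm_num, zpow_neg_one]
      ring
    rw [hg, coeff_sub, z_sq, coeff_single_mul, winv_coeff_zero]
    have : (w⁻¹).coeff (0 - 2) = 0 := by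
      apply coeff_eq_zero_of_lt_order
      rw [order_inv w_ne, order_w]
      norm_num
    rw [this]
    rw [show (0:ℤ) = ((0:ℕ):ℤ) by norm_num, zchoose_nat]
    simp
  · obtain ⟨s, rfl⟩ : ∃ s : ℕ, r = (s:ℤ) + 1 := ⟨(r - 1).toNat, by omega⟩
    have hg : g 0 ((s:ℤ)+1) = (w ^ s) - z ^ 2 * (w ^ s) := by
      rw [g, show ((s:ℤ) + 1 - ((0:ℕ):ℤ) - 1) = (s:ℤ) by push_cast; ring, zpow_natCast]
      ring
    rw [hg, coeff_sub, z_sq, coeff_single_mul]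
    have hsym := c_symm s ((s:ℤ) + 1)
    rw [show (2 * (s:ℤ) - ((s:ℤ)+1)) = (s:ℤ) + 1 - 2 by ring] at hsym
    rw [← hsym, sub_self]
    rw [show ((s:ℤ) + 1) = ((s+1 : ℕ) : ℤ) by push_cast; ring,
      show (0:ℤ) = ((0:ℕ):ℤ) by norm_num, zchoose_nat]
    simp

lemma g_main (m : ℕ) : ∀ r : ℤ, (g m r).coeff r = (zchoose m r : ℚ) := by
  induction m with
  | zero => exact g_zero_coeff
  | succ m ih =>
    intro r
    rw [g_coeff_pascal, ih r, ih (r - 1),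
      show ((m+1:ℕ):ℤ) = (m:ℤ) + 1 by push_cast; ring, zchoose_pascal]
    push_cast
    ring

end ResAux

open ResAux in
open PowerSeries in
/-- Let `C(z)` satisfy `C = 1 + 2zC + z²C²`.  For integers `n ≥ 2` and `t ≥ 1`, the
residue (coefficient of `z^{-1}`) of `(z/(1+z+z²))^t·(1+z)^{2n-3}(1-z)/z^n`, read in
the field of formal Laurent series over `ℚ`, equals `C(n-2,n-t-1)`, i.e. the
coefficient of `v^{n-t-1}` in `(1+v)^{n-2}`. -/
theorem residue_substitution (C : PowerSeries ℚ)
    (hC : C = 1 + 2 * X * C + X ^ 2 * C ^ 2) (n t : ℕ) (hn : 2 ≤ n) (ht : 1 ≤ t) :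
    HahnSeries.coeff
        (((HahnSeries.single (1 : ℤ) (1 : ℚ))
            / (1 + HahnSeries.single (1 : ℤ) (1 : ℚ)
              + (HahnSeries.single (1 : ℤ) (1 : ℚ)) ^ 2)) ^ t
          * (1 + HahnSeries.single (1 : ℤ) (1 : ℚ)) ^ (2 * n - 3)
          * (1 - HahnSeries.single (1 : ℤ) (1 : ℚ))
          / (HahnSeries.single (1 : ℤ) (1 : ℚ)) ^ n) (-1)
      = ((zchoose ((n : ℤ) - 2) ((n : ℤ) - t - 1) : ℤ) : ℚ) := by
  have key : (z / w) ^ t * (1 + z) ^ (2 * n - 3) * (1 - z) / z ^ n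
      = HahnSeries.single ((t:ℤ) - n) 1 * g (n - 2) ((n:ℤ) - t - 1) := by
    rw [show (2 * n - 3) = 2 * (n - 2) + 1 from by omega, g,
      show ((n:ℤ) - t - 1) - ((n - 2 : ℕ):ℤ) - 1 = -(t:ℤ) from by omega,
      RatFunc.single_zpow]
    rw [div_pow, div_eq_mul_inv, div_eq_mul_inv, zpow_sub₀ z_ne, zpow_natCast, zpow_natCast,
      zpow_neg, zpow_natCast]
    field_simp
  show ((z / w) ^ t * (1 + z) ^ (2 * n - 3) * (1 - z) / z ^ n).coeff (-1) = _
  rw [key, coeff_single_mul, show (-1 : ℤ) - ((t:ℤ) - n) = (n:ℤ) - t - 1 from by ring,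
    g_main]
  congr 2
  omega
end
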